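/- For every integer p ≥ 1, the spindle graph M_{3p+1} is not 3-colourable, i.e. its chromatic number is greater than 3. -/
import Mathlib


/-- The spindle graph `M_{3p+1}` on vertices `u_0, …, u_{3p}` (elements of `ZMod (3p+1)`):
it consists of the Hamiltonian cycle `u_0 u_1 … u_{3p} u_0` together with, for each
`i ∈ {1, …, p}`, the chords `u_{3i} u_{3i+2}` and `u_{3i} u_{3i-2}` (so that
`N(u_{3i}) = {u_{3i-2}, u_{3i-1}, u_{3i+1}, u_{3i+2}}`), and the chord `u_0 u_2`
(which is forced by the requirement
`N(u_{3i-1}) ∩ N(u_{3i-2}) = {u_{3i-3}, u_{3i}}` for `i = 1`).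
In particular `M_4 ≅ K_4` and `M_7` is the (Moser) spindle of the paper. -/
def spindle (p : ℕ) : SimpleGraph (ZMod (3 * p + 1)) :=
  SimpleGraph.fromRel (fun a b =>
    b = a + 1 ∨
    (∃ i : ℕ, 1 ≤ i ∧ i ≤ p ∧ a = ((3 * i : ℕ) : ZMod (3 * p + 1)) ∧
      (b = a + 2 ∨ b = a - 2)) ∨
    (a = 0 ∧ b = 2))

/-- For every integer `p ≥ 1`, the spindle graph `M_{3p+1}` is not 3-colourable. -/
theorem spindle_not_three_colourable (p : ℕ) (hp : 1 ≤ p) :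
    ¬ (spindle p).Colorable 3 := by
  rintro ⟨c⟩
  haveI hn : NeZero (3 * p + 1) := ⟨by omega⟩
  have hcast : ∀ k : ℕ, 0 < k → k < 3 * p + 1 → ((k : ZMod (3 * p + 1)) ≠ 0) := by
    intro k hk1 hk2 h
    rw [ZMod.natCast_eq_zero_iff] at h
    have := Nat.le_of_dvd hk1 h
    omega
  have hne : ∀ (a : ZMod (3 * p + 1)) (k : ℕ), 0 < k → k < 3 * p + 1 → a + (k : ZMod (3*p+1)) ≠ a := by
    intro a k h1 h2 h
    exact hcast k h1 h2 (by rwa [add_eq_left] at h)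
  have adj : ∀ a b : ZMod (3 * p + 1), a ≠ b →
      (b = a + 1 ∨
        (∃ i : ℕ, 1 ≤ i ∧ i ≤ p ∧ a = ((3 * i : ℕ) : ZMod (3 * p + 1)) ∧
          (b = a + 2 ∨ b = a - 2)) ∨
        (a = 0 ∧ b = 2)) → (spindle p).Adj a b := by
    intro a b hab h
    exact (SimpleGraph.fromRel_adj _ a b).mpr ⟨hab, Or.inl h⟩
  have pigeon : ∀ a0 a1 a2 a3 : Fin 3, a0 ≠ a1 → a0 ≠ a2 → a1 ≠ a2 → a1 ≠ a3 →
      a2 ≠ a3 → a3 = a0 := by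
    intro a0 a1 a2 a3 h1 h2 h3 h4 h5
    have := a0.isLt; have := a1.isLt; have := a2.isLt; have := a3.isLt
    simp only [Ne, Fin.ext_iff] at *
    omega
  -- key: all vertices `3i` get the colour of `0`
  have key : ∀ i : ℕ, i ≤ p → c (((3 * i : ℕ) : ZMod (3 * p + 1))) = c 0 := by
    intro i
    induction i with
    | zero => intro _; norm_num
    | succ i ih =>
      intro hip
      have hi : i ≤ p := by omega
      set x : ZMod (3 * p + 1) := ((3 * i : ℕ) : ZMod (3 * p + 1)) with hx
      have h1 : (1 : ZMod (3*p+1)) = ((1 : ℕ) : ZMod (3*p+1)) := by push_cast; ring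
      have h2 : (2 : ZMod (3*p+1)) = ((2 : ℕ) : ZMod (3*p+1)) := by push_cast; ring
      have h3 : (3 : ZMod (3*p+1)) = ((3 : ℕ) : ZMod (3*p+1)) := by push_cast; ring
      have ne1 : x + 1 ≠ x := by rw [h1]; exact hne x 1 (by omega) (by omega)
      have ne2 : x + 2 ≠ x := by rw [h2]; exact hne x 2 (by omega) (by omega)
      have ne3 : x + 3 ≠ x := by rw [h3]; exact hne x 3 (by omega) (by omega)
      have ne21 : x + 2 ≠ x + 1 := by
        intro h
        have : (x + 1) + 1 = x + 1 := by rw [show (x+1)+1 = x + 2 by ring, h]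
        exact (by rw [h1] at this; exact hne (x+1) 1 (by omega) (by omega) this)
      have ne31 : x + 3 ≠ x + 1 := by
        intro h
        have : (x + 1) + 2 = x + 1 := by rw [show (x+1)+2 = x + 3 by ring, h]
        exact (by rw [h2] at this; exact hne (x+1) 2 (by omega) (by omega) this)
      have ne32 : x + 3 ≠ x + 2 := by
        intro h
        have : (x + 2) + 1 = x + 2 := by rw [show (x+2)+1 = x + 3 by ring, h]
        exact (by rw [h1] at this; exact hne (x+2) 1 (by omega) (by omega) this)
      -- edges
      have e01 : (spindle p).Adj x (x + 1) := adj x (x+1) ne1.symm (Or.inl rfl)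
      have e12 : (spindle p).Adj (x+1) (x+2) := by
        refine adj (x+1) (x+2) (fun h => ne21 h.symm) (Or.inl ?_)
        ring
      have e23 : (spindle p).Adj (x+2) (x+3) := by
        refine adj (x+2) (x+3) (fun h => ne32 h.symm) (Or.inl ?_)
        ring
      have e02 : (spindle p).Adj x (x + 2) := by
        refine adj x (x+2) ne2.symm ?_
        rcases Nat.eq_zero_or_pos i with h0 | h0
        · refine Or.inr (Or.inr ⟨?_, ?_⟩)
          · rw [hx, h0]; norm_num
          · rw [hx, h0]; norm_num
        · exact Or.inr (Or.inl ⟨i, h0, hi, rfl, Or.inl rfl⟩)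
      have hx3 : x + 3 = ((3 * (i+1) : ℕ) : ZMod (3 * p + 1)) := by
        rw [hx]; push_cast; ring
      have e31 : (spindle p).Adj (x+3) (x+1) := by
        refine adj (x+3) (x+1) ne31 ?_
        refine Or.inr (Or.inl ⟨i+1, by omega, hip, hx3, Or.inr ?_⟩)
        ring
      -- colours
      have d01 := c.valid e01
      have d12 := c.valid e12
      have d23 := c.valid e23
      have d02 := c.valid e02
      have d31 := c.valid e31
      have : c (x + 3) = c x :=
        pigeon (c x) (c (x+1)) (c (x+2)) (c (x+3)) d01 d02 d12 (fun h => d31 h.symm) d23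
      rw [← hx3, this]
      exact ih hi
  have hlast := key p le_rfl
  have hedge : (spindle p).Adj ((3 * p : ℕ) : ZMod (3 * p + 1)) 0 := by
    refine adj _ 0 (hcast (3*p) (by omega) (by omega)) (Or.inl ?_)
    have : ((3 * p : ℕ) : ZMod (3 * p + 1)) + 1 = ((3 * p + 1 : ℕ) : ZMod (3 * p + 1)) := by
      push_cast; ring
    rw [this, ZMod.natCast_self]
  exact c.valid hedge hlast
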